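/- Let ε ∈ Z²(G₂,G₁). The twisted product G₁ ×_ε G₂ and the direct product G₁ × G₂ are isomorphic by an isomorphism leaving G₁ invariant if and only if there exists σ ∈ Aut(G₁) such that σ ∘ ε ∈ B²(G₂,G₁). -/

import Mathlib

/-- A normalized 2-cocycle of `B` with coefficients in `A` (trivial action). -/
def IsCocycle {A B : Type*} [Group A] [Group B] (ε : B → B → A) : Prop :=
  (∀ g h k : B, ε h g * ε (h * g) k = ε g k * ε h (g * k)) ∧
  (∀ g : B, ε g 1 = 1) ∧ (∀ g : B, ε 1 g = 1)

/-- The twisted multiplication on `G₁ × G₂` induced by a 2-cocycle `ε`. -/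
def twMul {G₁ G₂ : Type*} [Group G₁] [Group G₂] (ε : G₂ → G₂ → G₁) :
    G₁ × G₂ → G₁ × G₂ → G₁ × G₂ :=
  fun p q => (p.1 * q.1 * ε p.2 q.2, p.2 * q.2)

/-- `φ` is a group homomorphism from `G₁ ×_{ε₁} G₂` to `G₁ ×_{ε₂} G₂`. -/
def IsTwHom {G₁ G₂ : Type*} [Group G₁] [Group G₂] (ε₁ ε₂ : G₂ → G₂ → G₁)
    (φ : G₁ × G₂ → G₁ × G₂) : Prop :=
  ∀ p q, φ (twMul ε₁ p q) = twMul ε₂ (φ p) (φ q)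

theorem stmt_16 {G₁ G₂ : Type*} [CommGroup G₁] [Group G₂]
    (ε : G₂ → G₂ → G₁) (hε : IsCocycle ε) :
    (∃ φ : G₁ × G₂ → G₁ × G₂, Function.Bijective φ ∧
        IsTwHom ε (fun _ _ => (1 : G₁)) φ ∧
        φ '' {p : G₁ × G₂ | p.2 = 1} = {p : G₁ × G₂ | p.2 = 1}) ↔
      (∃ σ : G₁ ≃* G₁, ∃ t : G₂ → G₁, t 1 = 1 ∧
        ∀ y y' : G₂, σ (ε y y') = t y * t y' * (t (y * y'))⁻¹) := by
  obtain ⟨hc, hr, hl⟩ := hε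
  constructor
  · rintro ⟨φ, hbij, hhom, himg⟩
    have hsnd : ∀ x : G₁, (φ (x, 1)).2 = 1 := by
      intro x
      have : φ (x, 1) ∈ φ '' {p : G₁ × G₂ | p.2 = 1} := ⟨(x, 1), rfl, rfl⟩
      rw [himg] at this
      exact this
    have hfull : ∀ x : G₁, φ (x, 1) = ((φ (x, 1)).1, 1) := by
      intro x; exact Prod.ext rfl (hsnd x)
    have h11 : φ (1, 1) = (1, 1) := by
      have h := hhom (1, 1) (1, 1)
      simp only [twMul, one_mul, mul_one, hr 1] at h
      have h1 : (φ (1, 1)).1 = (φ (1, 1)).1 * (φ (1, 1)).1 := by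
        conv_lhs => rw [h]
      have h2 : (φ (1, 1)).2 = (φ (1, 1)).2 * (φ (1, 1)).2 := by
        conv_lhs => rw [h]
      exact Prod.ext (right_eq_mul.mp h1) (right_eq_mul.mp h2)
    set F : G₁ → G₁ := fun x => (φ (x, 1)).1 with hF
    have hFmul : ∀ x x' : G₁, F (x * x') = F x * F x' := by
      intro x x'
      have h := hhom (x, 1) (x', 1)
      simp only [twMul, mul_one, hr 1] at h
      have := congrArg Prod.fst h
      simpa using this
    have hFinj : Function.Injective F := by
      intro a b hab
      have : φ (a, 1) = φ (b, 1) := by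
        rw [hfull a, hfull b]
        exact congrArg (fun z => (z, (1 : G₂))) hab
      have := hbij.1 this
      exact (Prod.ext_iff.1 this).1
    have hFsurj : Function.Surjective F := by
      intro z
      have : ((z, 1) : G₁ × G₂) ∈ φ '' {p : G₁ × G₂ | p.2 = 1} := by
        rw [himg]; rfl
      obtain ⟨p, hp, hpe⟩ := this
      refine ⟨p.1, ?_⟩
      have hp1 : p = (p.1, 1) := Prod.ext rfl hp
      show (φ (p.1, 1)).1 = z
      rw [← hp1, hpe]
    let Fm : G₁ →* G₁ := MonoidHom.mk' F hFmul
    let σ : G₁ ≃* G₁ := MulEquiv.ofBijective Fm ⟨hFinj, hFsurj⟩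
    refine ⟨σ, fun y => (φ (1, y)).1, ?_, ?_⟩
    · show (φ (1, 1)).1 = 1
      rw [h11]
    · intro y y'
      have h1 := hhom (ε y y', 1) (1, y * y')
      have h2 := hhom (1, y) (1, y')
      simp only [twMul, hl, hr, one_mul, mul_one] at h1 h2
      have hkey := congrArg Prod.fst (h2.symm.trans h1)
      simp only at hkey
      show F (ε y y') = (φ (1, y)).1 * (φ (1, y')).1 * ((φ (1, y * y')).1)⁻¹
      rw [eq_mul_inv_iff_mul_eq]
      exact hkey.symm
  · rintro ⟨σ, t, ht1, ht⟩
    refine ⟨fun p => (σ p.1 * t p.2, p.2), ?_, ?_, ?_⟩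
    · constructor
      · intro p q h
        obtain ⟨h1, h2⟩ := Prod.ext_iff.1 h
        simp only at h1 h2
        rw [h2] at h1
        have : σ p.1 = σ q.1 := mul_right_cancel h1
        exact Prod.ext (σ.injective this) h2
      · intro q
        exact ⟨(σ.symm (q.1 * (t q.2)⁻¹), q.2), by simp [mul_assoc]⟩
    · intro p q
      show ((σ (p.1 * q.1 * ε p.2 q.2) * t (p.2 * q.2), p.2 * q.2) : G₁ × G₂) =
        (σ p.1 * t p.2 * (σ q.1 * t q.2) * 1, p.2 * q.2)
      refine Prod.ext ?_ rfl
      show σ (p.1 * q.1 * ε p.2 q.2) * t (p.2 * q.2) = σ p.1 * t p.2 * (σ q.1 * t q.2) * 1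
      rw [map_mul, map_mul, ht, mul_one]
      calc σ p.1 * σ q.1 * (t p.2 * t q.2 * (t (p.2 * q.2))⁻¹) * t (p.2 * q.2)
          = σ p.1 * σ q.1 * (t p.2 * t q.2) := by group
        _ = σ p.1 * t p.2 * (σ q.1 * t q.2) := mul_mul_mul_comm _ _ _ _
    · ext p
      constructor
      · rintro ⟨q, hq, rfl⟩
        exact hq
      · intro hp
        refine ⟨(σ.symm p.1, 1), rfl, ?_⟩
        have : p = (p.1, 1) := Prod.ext rfl hp
        rw [this]
        simp [ht1]
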